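/- Let g ∈ SL(n,ℤ) admit a cyclic vector over ℚ (i.e., there is v ∈ ℚ^n with v, gv, ..., g^{n-1}v a basis of ℚ^n). Then g is conjugate in SL(n,ℤ) to a matrix lying in the Bruhat cell B·p_σ·U corresponding to the n-cycle σ = (1 2 ⋯ n), where B is the upper triangular Borel subgroup of SL(n,ℚ) and p_σ is a signed permutation matrix representing σ. -/

import Mathlib

/-- The signed permutation matrix `p_σ` of the `n`-cycle `σ = (1 2 ⋯ n)`: entry `(σ(i), i)`
is `1` for `i ≤ n-1`, entry `(σ(n), n)` is `(-1)^{n+1}`, all other entries are `0`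
(0-indexed: `σ` sends `j` to `j+1 mod n`). Its determinant is `1`. -/
def psigma (n : ℕ) : Matrix (Fin n) (Fin n) ℚ := fun i j =>
  if (i : ℕ) = ((j : ℕ) + 1) % n then (if (j : ℕ) = n - 1 then (-1 : ℚ) ^ (n + 1) else 1)
  else 0

open Matrix

namespace Stmt6Aux

lemma natAbs_emod_lt' (a b : ℤ) (hb : b ≠ 0) : (a % b).natAbs < b.natAbs := by
  have h1 := Int.emod_nonneg a hb
  rcases lt_or_gt_of_ne hb with h | h
  · have h2 := Int.emod_lt_of_pos a (by omega : (0:ℤ) < -b)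
    rw [Int.emod_neg] at h2
    omega
  · have h2 := Int.emod_lt_of_pos a h
    omega

variable {n : ℕ}

/-- Euclid-style clearing of the entry `(i, j)` using rows `j` and `i`,
by integer transvections (determinant-1 matrices). -/
lemma euclid (j i : Fin n) (hij : j ≠ i) :
    ∀ (N : ℕ) (B : Matrix (Fin n) (Fin n) ℤ), (B i j).natAbs ≤ N →
    ∃ y : Matrix (Fin n) (Fin n) ℤ, y.det = 1 ∧
      (y * B) i j = 0 ∧
      (∀ k l, k ≠ i → k ≠ j → (y * B) k l = B k l) ∧
      (∀ l, B j l = 0 → B i l = 0 → (y * B) j l = 0 ∧ (y * B) i l = 0) := by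
  intro N
  induction N with
  | zero =>
    intro B hB
    have hB0 : B i j = 0 := by omega
    exact ⟨1, Matrix.det_one, by simpa using hB0, by simp, fun l h1 h2 => by simpa using ⟨h1, h2⟩⟩
  | succ N IH =>
    intro B hB
    by_cases hb : B i j = 0
    · exact ⟨1, Matrix.det_one, by simpa using hb, by simp, fun l h1 h2 => by simpa using ⟨h1, h2⟩⟩
    · -- step 1 : row j ← row j - (B j j / B i j) * row i
      set c1 : ℤ := -(B j j / B i j) with hc1
      set B1 : Matrix (Fin n) (Fin n) ℤ := transvection j i c1 * B with hB1
      have hB1j : ∀ l, B1 j l = B j l + c1 * B i l := fun l => by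
        rw [hB1, transvection_mul_apply_same]
      have hB1o : ∀ k l, k ≠ j → B1 k l = B k l := fun k l hk => by
        rw [hB1, transvection_mul_apply_of_ne j i k l hk]
      have hB1jj : B1 j j = B j j % B i j := by
        rw [hB1j, Int.emod_def]; ring
      by_cases ha1 : B1 j j = 0
      · -- now row j has zero at column j; B1 i j = B i j ≠ 0.
        -- row j ← row j + row i ; then row i ← row i - row j
        set B2 : Matrix (Fin n) (Fin n) ℤ := transvection j i 1 * B1 with hB2
        set B3 : Matrix (Fin n) (Fin n) ℤ := transvection i j (-1) * B2 with hB3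
        have hB2j : ∀ l, B2 j l = B1 j l + B1 i l := fun l => by
          rw [hB2, transvection_mul_apply_same]; ring_nf
        have hB2o : ∀ k l, k ≠ j → B2 k l = B1 k l := fun k l hk => by
          rw [hB2, transvection_mul_apply_of_ne j i k l hk]
        have hB3i : ∀ l, B3 i l = B2 i l + -1 * B2 j l := fun l => by
          rw [hB3, transvection_mul_apply_same]
        have hB3o : ∀ k l, k ≠ i → B3 k l = B2 k l := fun k l hk => by
          rw [hB3, transvection_mul_apply_of_ne i j k l hk]
        refine ⟨transvection i j (-1) * transvection j i 1 * transvection j i c1,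
          ?_, ?_, ?_, ?_⟩
        · rw [Matrix.det_mul, Matrix.det_mul,
            det_transvection_of_ne _ _ hij.symm, det_transvection_of_ne _ _ hij,
            det_transvection_of_ne _ _ hij]
          ring
        · have e3 : transvection i j (-1) * transvection j i 1 * transvection j i c1 * B = B3 := by
            rw [hB3, hB2, hB1]; simp only [Matrix.mul_assoc]
          rw [e3, hB3i, hB2j, hB2o i j hij.symm, hB1o i j hij.symm, ha1]
          ring
        · intro k l hki hkj
          have e3 : transvection i j (-1) * transvection j i 1 * transvection j i c1 * B = B3 := by
            rw [hB3, hB2, hB1]; simp only [Matrix.mul_assoc]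
          rw [e3, hB3o k l hki, hB2o k l hkj, hB1o k l hkj]
        · intro l hjl hil
          have e3 : transvection i j (-1) * transvection j i 1 * transvection j i c1 * B
              = B3 := by rw [hB3, hB2, hB1]; simp only [Matrix.mul_assoc]
          have h1j : B1 j l = 0 := by rw [hB1j, hjl, hil]; ring
          have h1i : B1 i l = 0 := by rw [hB1o i l hij.symm, hil]
          have h2j : B2 j l = 0 := by rw [hB2j, h1j, h1i]; ring
          have h2i : B2 i l = 0 := by rw [hB2o i l hij.symm, h1i]
          constructor
          · rw [e3, hB3o j l hij, h2j]
          · rw [e3, hB3i, h2i, h2j]; ring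
      · -- step 2 : row i ← row i - (B1 i j / B1 j j) * row j ; then recurse
        set c2 : ℤ := -(B1 i j / B1 j j) with hc2
        set B2 : Matrix (Fin n) (Fin n) ℤ := transvection i j c2 * B1 with hB2
        have hB2i : ∀ l, B2 i l = B1 i l + c2 * B1 j l := fun l => by
          rw [hB2, transvection_mul_apply_same]
        have hB2o : ∀ k l, k ≠ i → B2 k l = B1 k l := fun k l hk => by
          rw [hB2, transvection_mul_apply_of_ne i j k l hk]
        have hB2ij : B2 i j = B1 i j % B1 j j := by
          rw [hB2i, Int.emod_def]; ring
        have hB1ij : B1 i j = B i j := hB1o i j hij.symm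
        have hlt : (B2 i j).natAbs ≤ N := by
          have l1 : (B2 i j).natAbs < (B1 j j).natAbs := by
            rw [hB2ij]; exact natAbs_emod_lt' _ _ ha1
          have l2 : (B1 j j).natAbs < (B i j).natAbs := by
            rw [hB1jj]; exact natAbs_emod_lt' _ _ hb
          omega
        obtain ⟨y, hydet, hy0, hyo, hyp⟩ := IH B2 hlt
        refine ⟨y * (transvection i j c2 * transvection j i c1), ?_, ?_, ?_, ?_⟩
        · rw [Matrix.det_mul, Matrix.det_mul, hydet,
            det_transvection_of_ne _ _ hij.symm, det_transvection_of_ne _ _ hij]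
          ring
        · have e : y * (transvection i j c2 * transvection j i c1) * B = y * B2 := by
            rw [hB2, hB1]; simp only [Matrix.mul_assoc]
          rw [e]; exact hy0
        · intro k l hki hkj
          have e : y * (transvection i j c2 * transvection j i c1) * B = y * B2 := by
            rw [hB2, hB1]; simp only [Matrix.mul_assoc]
          rw [e, hyo k l hki hkj, hB2o k l hki, hB1o k l hkj]
        · intro l hjl hil
          have e : y * (transvection i j c2 * transvection j i c1) * B = y * B2 := by
            rw [hB2, hB1]; simp only [Matrix.mul_assoc]
          have h1j : B1 j l = 0 := by rw [hB1j, hjl, hil]; ring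
          have h1i : B1 i l = 0 := by rw [hB1o i l hij.symm, hil]
          have h2j : B2 j l = 0 := by rw [hB2o j l hij, h1j]
          have h2i : B2 i l = 0 := by rw [hB2i, h1i, h1j]; ring
          rw [e]; exact hyp l h2j h2i

end Stmt6Aux

namespace Stmt6Aux

lemma encode_lt (i j : Fin n) : (j : ℕ) * n + (i : ℕ) < n * n := by
  have hi := i.isLt; have hj := j.isLt
  calc (j:ℕ) * n + i < (j:ℕ) * n + n := by omega
  _ = ((j:ℕ) + 1) * n := by ring
  _ ≤ n * n := Nat.mul_le_mul_right n (by omega)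

lemma encode_inj {i j i' j' : Fin n} (h : (j':ℕ) * n + (i':ℕ) = (j:ℕ) * n + (i:ℕ)) :
    i' = i ∧ j' = j := by
  have hi := i.isLt; have hi' := i'.isLt
  have h1 : ((j':ℕ) * n + (i':ℕ)) % n = (i':ℕ) := by
    rw [Nat.mul_add_mod']; exact Nat.mod_eq_of_lt hi'
  have h2 : ((j:ℕ) * n + (i:ℕ)) % n = (i:ℕ) := by
    rw [Nat.mul_add_mod']; exact Nat.mod_eq_of_lt hi
  have hii : (i' : ℕ) = i := by rw [← h1, ← h2, h]
  have hjj : (j' : ℕ) = j := by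
    have hn : 0 < n := by omega
    have := h; rw [hii] at this
    exact Nat.eq_of_mul_eq_mul_right hn (by omega)
  exact ⟨Fin.ext hii, Fin.ext hjj⟩

/-- Any integer square matrix can be brought to upper-triangular form by left
multiplication by a determinant-one integer matrix. -/
lemma clear_below (A : Matrix (Fin n) (Fin n) ℤ) :
    ∃ x : Matrix (Fin n) (Fin n) ℤ, x.det = 1 ∧ ∀ i j : Fin n, j < i → (x * A) i j = 0 := by
  suffices H : ∀ t : ℕ, ∃ x : Matrix (Fin n) (Fin n) ℤ, x.det = 1 ∧
      ∀ i j : Fin n, j < i → (j:ℕ) * n + (i:ℕ) < t → (x * A) i j = 0 by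
    obtain ⟨x, hxd, hx⟩ := H (n * n)
    exact ⟨x, hxd, fun i j hji => hx i j hji (encode_lt i j)⟩
  intro t
  induction t with
  | zero => exact ⟨1, Matrix.det_one, fun i j _ h => by omega⟩
  | succ t IH =>
    obtain ⟨x, hxd, hx⟩ := IH
    by_cases hex : ∃ p : Fin n × Fin n, p.2 < p.1 ∧ (p.2:ℕ) * n + (p.1:ℕ) = t
    · obtain ⟨⟨i, j⟩, hji, hpos⟩ := hex
      dsimp only at hji hpos
      have hij : j ≠ i := ne_of_lt hji
      obtain ⟨y, hyd, hy0, hyo, hyp⟩ := euclid j i hij ((x * A) i j).natAbs (x * A) le_rfl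
      refine ⟨y * x, by rw [Matrix.det_mul, hyd, hxd]; ring, ?_⟩
      intro i' j' hji' hlt
      have e : y * x * A = y * (x * A) := by simp only [Matrix.mul_assoc]
      rw [e]
      rcases Nat.lt_or_ge ((j':ℕ) * n + (i':ℕ)) t with hlt' | hge
      · -- previously cleared position; show it is preserved
        have hold : (x * A) i' j' = 0 := hx i' j' hji' hlt'
        by_cases hi'i : i' = i
        · have hvi : (i':ℕ) = (i:ℕ) := congrArg Fin.val hi'i
          have hj'j : (j':ℕ) < (j:ℕ) := by
            by_contra hcon
            push_neg at hcon
            have hm : (j:ℕ) * n ≤ (j':ℕ) * n := Nat.mul_le_mul_right n hcon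
            omega
          have hj'jf : j' < j := hj'j
          have hzj : (x * A) j j' = 0 := by
            apply hx j j' hj'jf
            have hm : ((j':ℕ) + 1) * n ≤ (j:ℕ) * n := Nat.mul_le_mul_right n hj'j
            have hk : ((j':ℕ) + 1) * n = (j':ℕ) * n + n := by ring
            have hjn := j.isLt
            omega
          rw [hi'i] at hold ⊢
          exact (hyp j' hzj hold).2
        · by_cases hi'j : i' = j
          · rw [hi'j] at hold hji' ⊢
            have hj'j : (j':ℕ) < (j:ℕ) := hji'
            have hzi : (x * A) i j' = 0 := by
              apply hx i j' (lt_trans hji' hji)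
              have hm : ((j':ℕ) + 1) * n ≤ (j:ℕ) * n := Nat.mul_le_mul_right n hj'j
              have hk : ((j':ℕ) + 1) * n = (j':ℕ) * n + n := by ring
              have hin := i.isLt
              omega
            exact (hyp j' hold hzi).1
          · rw [hyo i' j' hi'i hi'j]; exact hold
      · -- this is the new position (i, j)
        have he : (j':ℕ) * n + (i':ℕ) = t := by omega
        have hee : (j':ℕ) * n + (i':ℕ) = (j:ℕ) * n + (i:ℕ) := by rw [he, ← hpos]
        obtain ⟨hii, hjj⟩ := encode_inj hee
        rw [hii, hjj]
        exact hy0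
    · refine ⟨x, hxd, fun i j hji hlt => ?_⟩
      apply hx i j hji
      rcases Nat.lt_or_ge ((j:ℕ) * n + (i:ℕ)) t with h | h
      · exact h
      · exact absurd ⟨⟨i, j⟩, hji, by dsimp only; omega⟩ hex



variable {n : ℕ}

lemma prev_next (hn : 0 < n) (k : ℕ) (hk : k < n) : ((k + 1) % n + (n - 1)) % n = k := by
  rw [Nat.mod_add_mod]
  have h : k + 1 + (n - 1) = k + n := by omega
  rw [h, Nat.add_mod_right]
  exact Nat.mod_eq_of_lt hk

lemma next_prev (hn : 0 < n) (i : ℕ) (hi : i < n) : ((i + (n - 1)) % n + 1) % n = i := by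
  rw [Nat.mod_add_mod]
  have h : i + (n - 1) + 1 = i + n := by omega
  rw [h, Nat.add_mod_right]
  exact Nat.mod_eq_of_lt hi

lemma exists_int_matrix (P : Matrix (Fin n) (Fin n) ℚ) :
    ∃ (A : Matrix (Fin n) (Fin n) ℤ) (Dq : ℚ), Dq ≠ 0 ∧
      A.map ((↑) : ℤ → ℚ) = Dq • P := by
  classical
  set D : ℕ := ∏ p : Fin n × Fin n, (P p.1 p.2).den with hD
  have hDpos : 0 < D := Finset.prod_pos fun p _ => (P p.1 p.2).pos
  refine ⟨fun i j => (P i j).num * ((D / (P i j).den : ℕ) : ℤ), (D : ℚ),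
    by exact_mod_cast hDpos.ne', ?_⟩
  ext i j
  have hdvd : (P i j).den ∣ D :=
    Finset.dvd_prod_of_mem (fun p : Fin n × Fin n => (P p.1 p.2).den)
      (Finset.mem_univ (i, j))
  obtain ⟨k, hk⟩ := hdvd
  have hden0 : ((P i j).den : ℚ) ≠ 0 := by exact_mod_cast (P i j).pos.ne'
  have hdiv : D / (P i j).den = k := by rw [hk]; exact Nat.mul_div_cancel_left k (P i j).pos
  have hq : ((P i j).den : ℚ) * P i j = ((P i j).num : ℚ) := Rat.den_mul_eq_num _
  show (((P i j).num * ((D / (P i j).den : ℕ) : ℤ) : ℤ) : ℚ) = (D : ℚ) • P i j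
  simp only [Matrix.map_apply, Matrix.smul_apply, hdiv]
  push_cast
  rw [smul_eq_mul, hk]
  push_cast
  calc ((P i j).num : ℚ) * k = (((P i j).den : ℚ) * P i j) * k := by rw [hq]
  _ = ((P i j).den : ℚ) * (k : ℚ) * P i j := by ring

lemma psigma_det (hn : 2 ≤ n) : (psigma n).det = 1 := by
  obtain ⟨m, rfl⟩ : ∃ m, n = m + 2 := ⟨n - 2, by omega⟩
  classical
  set d : Fin (m + 2) → ℚ := fun j => if (j : ℕ) = m + 1 then (-1 : ℚ) ^ (m + 3) else 1
    with hd
  have key : psigma (m + 2) = ((finRotate (m + 2))⁻¹.permMatrix ℚ) * Matrix.diagonal d := by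
    ext i j
    rw [Matrix.mul_diagonal]
    have hval : ((finRotate (m + 2) j : Fin (m+2)) : ℕ) = ((j : ℕ) + 1) % (m + 2) := by
      rw [finRotate_succ_apply, Fin.val_add]
      norm_num
    have hcond : ((finRotate (m + 2))⁻¹ i = j) ↔ ((i : ℕ) = ((j : ℕ) + 1) % (m + 2)) := by
      rw [Equiv.Perm.inv_eq_iff_eq, ← hval]
      exact Fin.ext_iff
    simp only [psigma, Equiv.Perm.permMatrix, PEquiv.toMatrix_apply, Equiv.toPEquiv_apply,
      Option.mem_def, Option.some.injEq]
    by_cases h : (i : ℕ) = ((j : ℕ) + 1) % (m + 2)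
    · rw [if_pos h, if_pos (hcond.mpr h), one_mul, hd]
      norm_num
    · rw [if_neg h, if_neg (fun hh => h (hcond.mp hh)), zero_mul]
  rw [key, Matrix.det_mul, Matrix.det_diagonal, Matrix.det_permutation]
  have hsign : Equiv.Perm.sign (finRotate (m + 2))⁻¹ = (-1 : ℤˣ) ^ (m + 1) := by
    rw [Equiv.Perm.sign_inv, sign_finRotate]
    rfl
  have hprod : ∏ j : Fin (m + 2), d j = (-1 : ℚ) ^ (m + 3) := by
    rw [Finset.prod_eq_single (⟨m + 1, by omega⟩ : Fin (m + 2))]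
    · simp [hd]
    · intro j _ hj
      have : (j : ℕ) ≠ m + 1 := fun hh => hj (Fin.ext hh)
      simp [hd, this]
    · simp
  rw [hsign, hprod]
  have : (((-1 : ℤˣ) ^ (m + 1) : ℤˣ) : ℚ) = (-1 : ℚ) ^ (m + 1) := by
    push_cast
    norm_num
  rw [this, ← pow_add]
  exact Even.neg_one_pow ⟨m + 2, by ring⟩


end Stmt6Aux

namespace Stmt6Aux
open Matrix
variable {n : ℕ}

lemma map_int_mul (M N : Matrix (Fin n) (Fin n) ℤ) :
    (M * N).map ((↑) : ℤ → ℚ) = M.map ((↑) : ℤ → ℚ) * N.map ((↑) : ℤ → ℚ) := by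
  simpa using Matrix.map_mul (L := M) (M := N) (f := Int.castRingHom ℚ)

lemma map_int_det (M : Matrix (Fin n) (Fin n) ℤ) :
    (M.map ((↑) : ℤ → ℚ)).det = (M.det : ℚ) := by
  simpa using (RingHom.map_det (Int.castRingHom ℚ) M).symm

lemma tri_diag_mul {M N : Matrix (Fin n) (Fin n) ℚ} (hM : M.BlockTriangular id)
    (hN : N.BlockTriangular id) (i : Fin n) : (M * N) i i = M i i * N i i := by
  rw [Matrix.mul_apply]
  apply Finset.sum_eq_single i
  · intro k _ hk
    rcases lt_or_gt_of_ne hk with h | h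
    · rw [hM h, zero_mul]
    · rw [hN h, mul_zero]
  · intro h; exact absurd (Finset.mem_univ i) h

end Stmt6Aux

open Matrix Stmt6Aux

/-- **Theorem.** If `g ∈ SL(n,ℤ)` admits a cyclic vector over `ℚ`, then `g` is conjugate in
`SL(n,ℤ)` to a matrix lying in the Bruhat cell `B · p_σ · U` of the `n`-cycle
`σ = (1 2 ⋯ n)`, where `B` is the upper triangular Borel subgroup of `SL(n,ℚ)` and `U`
consists of upper unitriangular matrices. -/
theorem stmt6 (n : ℕ) (hn : 3 ≤ n) (g : Matrix.SpecialLinearGroup (Fin n) ℤ)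
    (v : Fin n → ℚ) (c : Module.Basis (Fin n) ℚ (Fin n → ℚ))
    (hc : ∀ i : Fin n,
      c i = ((((g : Matrix (Fin n) (Fin n) ℤ)).map ((↑) : ℤ → ℚ)) ^ (i : ℕ)).mulVec v) :
    ∃ x : Matrix.SpecialLinearGroup (Fin n) ℤ, ∃ b u : Matrix (Fin n) (Fin n) ℚ,
      (∀ i j : Fin n, j < i → b i j = 0) ∧ b.det = 1 ∧
      (∀ i : Fin n, u i i = 1) ∧ (∀ i j : Fin n, j < i → u i j = 0) ∧
      (((x * g * x⁻¹ : Matrix.SpecialLinearGroup (Fin n) ℤ) :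
          Matrix (Fin n) (Fin n) ℤ)).map ((↑) : ℤ → ℚ) = b * psigma n * u := by
  classical
  have npos : 0 < n := by omega
  set G : Matrix (Fin n) (Fin n) ℚ :=
    ((g : Matrix (Fin n) (Fin n) ℤ)).map ((↑) : ℤ → ℚ) with hGdef
  have hGdet : G.det = 1 := by
    rw [hGdef, map_int_det, g.det_coe]
    norm_num
  -- the matrix of the cyclic basis
  set P : Matrix (Fin n) (Fin n) ℚ := (Pi.basisFun ℚ (Fin n)).toMatrix c with hPdef
  have hPapp : ∀ i j, P i j = c j i := fun i j => by
    rw [hPdef, Module.Basis.toMatrix_apply, Pi.basisFun_repr]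
  letI : Invertible P := (Pi.basisFun ℚ (Fin n)).invertibleToMatrix c
  have hPdet : P.det ≠ 0 := (Matrix.isUnit_det_of_invertible P).ne_zero
  -- the matrix of G in the cyclic basis
  set Cm : Matrix (Fin n) (Fin n) ℚ := Matrix.of fun k j => c.repr (G.mulVec (c j)) k with hCm
  have hGP : G * P = P * Cm := by
    ext i j
    rw [Matrix.mul_apply, Matrix.mul_apply]
    have h1 : ∑ k, G i k * P k j = (G.mulVec (c j)) i := by
      rw [Matrix.mulVec, dotProduct]
      exact Finset.sum_congr rfl fun k _ => by rw [hPapp]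
    have h2 : ∑ k, P i k * Cm k j = (G.mulVec (c j)) i := by
      calc ∑ k, P i k * Cm k j = ∑ k, c.repr (G.mulVec (c j)) k • c k i := by
            refine Finset.sum_congr rfl fun k _ => ?_
            rw [hPapp, hCm, smul_eq_mul]
            dsimp only [Matrix.of_apply]
            ring
      _ = (∑ k, c.repr (G.mulVec (c j)) k • c k) i := by
            rw [Finset.sum_apply]
            exact Finset.sum_congr rfl fun k _ => rfl
      _ = (G.mulVec (c j)) i := by rw [c.sum_repr (G.mulVec (c j))]
    rw [h1, h2]
  have hCcol : ∀ (j k : Fin n), (j : ℕ) + 1 < n →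
      Cm k j = if (k : ℕ) = (j : ℕ) + 1 then 1 else 0 := by
    intro j k hj
    have hsucc : G.mulVec (c j) = c ⟨(j : ℕ) + 1, hj⟩ := by
      rw [hc j, hc ⟨(j : ℕ) + 1, hj⟩, Matrix.mulVec_mulVec, ← pow_succ']
    rw [hCm]
    dsimp only [Matrix.of_apply]
    rw [hsucc, Module.Basis.repr_self, Finsupp.single_apply]
    by_cases hk : (k : ℕ) = (j : ℕ) + 1
    · rw [if_pos (Fin.ext hk.symm : (⟨(j:ℕ)+1, hj⟩ : Fin n) = k), if_pos hk]
    · rw [if_neg (fun hh => hk (congrArg Fin.val hh).symm), if_neg hk]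
  have hCdet : Cm.det = 1 := by
    have hd := congrArg Matrix.det hGP
    rw [Matrix.det_mul, Matrix.det_mul, hGdet, one_mul] at hd
    nth_rewrite 1 [← mul_one P.det] at hd
    exact (mul_left_cancel₀ hPdet hd).symm
  -- the unitriangular factor `T` with `psigma n * T = Cm`
  set ε : ℚ := (-1 : ℚ) ^ (n + 1) with hε
  have hε2 : ε * ε = 1 := by rw [hε, ← pow_add]; exact Even.neg_one_pow ⟨n + 1, by ring⟩
  set nxt : Fin n → Fin n := fun k => ⟨((k : ℕ) + 1) % n, Nat.mod_lt _ npos⟩ with hnxt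
  set prv : Fin n → Fin n := fun i => ⟨((i : ℕ) + (n - 1)) % n, Nat.mod_lt _ npos⟩ with hprv
  set T : Matrix (Fin n) (Fin n) ℚ :=
    Matrix.of (fun k l => (if (k : ℕ) = n - 1 then ε else 1) * Cm (nxt k) l) with hT
  have hpig : ∀ i k : Fin n, (i : ℕ) = ((k : ℕ) + 1) % n →
      psigma n i k = (if (k : ℕ) = n - 1 then ε else 1) := by
    intro i k h
    simp only [psigma, hε]
    rw [if_pos h]
  have hpig0 : ∀ i k : Fin n, (i : ℕ) ≠ ((k : ℕ) + 1) % n → psigma n i k = 0 := by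
    intro i k h
    simp only [psigma]
    rw [if_neg h]
  have hnp : ∀ i : Fin n, nxt (prv i) = i := by
    intro i
    apply Fin.ext
    rw [hnxt, hprv]
    exact next_prev npos (i : ℕ) i.isLt
  have hipv : ∀ i : Fin n, (i : ℕ) = (((prv i : Fin n) : ℕ) + 1) % n := by
    intro i
    rw [hprv]
    exact (next_prev npos (i : ℕ) i.isLt).symm
  have hpT : psigma n * T = Cm := by
    ext i j
    rw [Matrix.mul_apply]
    rw [Finset.sum_eq_single (prv i)]
    · rw [hpig i (prv i) (hipv i), hT]
      dsimp only [Matrix.of_apply]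
      rw [hnp i]
      by_cases hc1 : ((prv i : Fin n) : ℕ) = n - 1
      · rw [if_pos hc1, ← mul_assoc, hε2, one_mul]
      · rw [if_neg hc1, one_mul, one_mul]
    · intro k _ hk
      have h0 : psigma n i k = 0 := by
        apply hpig0
        intro hcon
        apply hk
        apply Fin.ext
        rw [hprv]
        dsimp only
        rw [hcon, prev_next npos (k : ℕ) k.isLt]
      rw [h0, zero_mul]
    · intro h; exact absurd (Finset.mem_univ _) h
  have hT_tri : T.BlockTriangular id := by
    intro k l hlk
    have hlk' : (l : ℕ) < (k : ℕ) := hlk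
    have hl : (l : ℕ) + 1 < n := by have := k.isLt; omega
    rw [hT]
    dsimp only [Matrix.of_apply]
    rw [hCcol l (nxt k) hl]
    have hne : ((nxt k : Fin n) : ℕ) ≠ (l : ℕ) + 1 := by
      rw [hnxt]
      dsimp only
      by_cases hk1 : (k : ℕ) + 1 = n
      · have hz : ((k : ℕ) + 1) % n = 0 := by rw [hk1, Nat.mod_self]
        omega
      · have hz : ((k : ℕ) + 1) % n = (k : ℕ) + 1 :=
          Nat.mod_eq_of_lt (by have := k.isLt; omega)
        omega
    rw [if_neg hne, mul_zero]
  have hTdet : T.det = 1 := by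
    have hd := congrArg Matrix.det hpT
    rw [Matrix.det_mul, psigma_det (by omega), one_mul] at hd
    rw [hd, hCdet]
  have hTdiag : ∀ i : Fin n, T i i ≠ 0 := by
    intro i h0
    have hp : T.det = ∏ k, T k k := Matrix.det_of_upperTriangular hT_tri
    rw [hTdet] at hp
    have : (∏ k, T k k) = 0 := Finset.prod_eq_zero (Finset.mem_univ i) h0
    rw [← hp] at this
    norm_num at this
  -- integral reduction: make the cyclic basis matrix upper triangular by an SL(n,ℤ) move
  obtain ⟨A, Dq, hDq0, hA⟩ := exists_int_matrix P
  obtain ⟨xm, hxdet, hxclear⟩ := clear_below A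
  set x : Matrix.SpecialLinearGroup (Fin n) ℤ := ⟨xm, hxdet⟩ with hx
  set X : Matrix (Fin n) (Fin n) ℚ := xm.map ((↑) : ℤ → ℚ) with hX
  have hXdet : X.det = 1 := by rw [hX, map_int_det, hxdet]; norm_num
  set L : Matrix (Fin n) (Fin n) ℚ := X * P with hL
  have hL_tri : L.BlockTriangular id := by
    intro i j hij
    have hij' : j < i := hij
    have h1 : ((xm * A).map ((↑) : ℤ → ℚ)) i j = 0 := by
      rw [Matrix.map_apply, hxclear i j hij']
      norm_num
    rw [map_int_mul, hA] at h1
    have h2 : X * (Dq • P) = Dq • L := by rw [hL, Matrix.mul_smul]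
    rw [h2] at h1
    have h3 : Dq * L i j = 0 := h1
    exact (mul_eq_zero.mp h3).resolve_left hDq0
  have hLdet : L.det ≠ 0 := by rw [hL, Matrix.det_mul, hXdet, one_mul]; exact hPdet
  letI : Invertible L := L.invertibleOfIsUnitDet (isUnit_iff_ne_zero.mpr hLdet)
  have hLinv_tri : (L⁻¹).BlockTriangular id := blockTriangular_inv_of_blockTriangular hL_tri
  have hLL : L * L⁻¹ = 1 := Matrix.mul_inv_of_invertible L
  have hdiagL : ∀ i, L i i * L⁻¹ i i = 1 := fun i => by
    rw [← tri_diag_mul hL_tri hLinv_tri i, hLL, Matrix.one_apply_eq]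
  set S : Matrix (Fin n) (Fin n) ℚ := T * L⁻¹ with hS
  have hS_tri : S.BlockTriangular id := hT_tri.mul hLinv_tri
  have hS_diag : ∀ i, S i i = T i i * L⁻¹ i i := fun i => tri_diag_mul hT_tri hLinv_tri i
  have hS_ne : ∀ i, S i i ≠ 0 := by
    intro i
    rw [hS_diag i]
    refine mul_ne_zero (hTdiag i) fun h0 => ?_
    have hcon := hdiagL i
    rw [h0, mul_zero] at hcon
    norm_num at hcon
  set u : Matrix (Fin n) (Fin n) ℚ := Matrix.diagonal (fun i => (S i i)⁻¹) * S with hu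
  set b : Matrix (Fin n) (Fin n) ℚ := L * Matrix.diagonal (fun i => S (prv i) (prv i)) with hb
  have hu_app : ∀ i j, u i j = (S i i)⁻¹ * S i j := fun i j => by
    rw [hu, Matrix.diagonal_mul]
  have hu_diag : ∀ i, u i i = 1 := fun i => by rw [hu_app, inv_mul_cancel₀ (hS_ne i)]
  have hu_tri : ∀ i j : Fin n, j < i → u i j = 0 := fun i j hij => by
    rw [hu_app, hS_tri hij, mul_zero]
  have hb_tri : ∀ i j : Fin n, j < i → b i j = 0 := fun i j hij => by
    rw [hb, Matrix.mul_diagonal, hL_tri hij, zero_mul]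
  set hmat : Matrix (Fin n) (Fin n) ℚ :=
    (((x * g * x⁻¹ : Matrix.SpecialLinearGroup (Fin n) ℤ) :
        Matrix (Fin n) (Fin n) ℤ)).map ((↑) : ℤ → ℚ) with hh
  have hhdet : hmat.det = 1 := by
    rw [hh, map_int_det, (x * g * x⁻¹).det_coe]
    norm_num
  have hXi : ∃ Xi : Matrix (Fin n) (Fin n) ℚ, hmat = X * G * Xi ∧ Xi * X = 1 := by
    refine ⟨((x⁻¹ : Matrix.SpecialLinearGroup (Fin n) ℤ) :
      Matrix (Fin n) (Fin n) ℤ).map ((↑) : ℤ → ℚ), ?_, ?_⟩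
    · rw [hh]
      have e1 : ((x * g * x⁻¹ : Matrix.SpecialLinearGroup (Fin n) ℤ) :
          Matrix (Fin n) (Fin n) ℤ)
          = (x : Matrix (Fin n) (Fin n) ℤ) * (g : Matrix (Fin n) (Fin n) ℤ) *
            ((x⁻¹ : Matrix.SpecialLinearGroup (Fin n) ℤ) : Matrix (Fin n) (Fin n) ℤ) := by
        simp
      rw [e1, map_int_mul, map_int_mul]
    · rw [← map_int_mul]
      have e2 : ((x⁻¹ : Matrix.SpecialLinearGroup (Fin n) ℤ) :
          Matrix (Fin n) (Fin n) ℤ) * (x : Matrix (Fin n) (Fin n) ℤ)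
          = (1 : Matrix (Fin n) (Fin n) ℤ) := by
        calc ((x⁻¹ : Matrix.SpecialLinearGroup (Fin n) ℤ) : Matrix (Fin n) (Fin n) ℤ) *
              (x : Matrix (Fin n) (Fin n) ℤ)
            = ((x⁻¹ * x : Matrix.SpecialLinearGroup (Fin n) ℤ) : Matrix (Fin n) (Fin n) ℤ) :=
              (Matrix.SpecialLinearGroup.coe_mul _ _).symm
        _ = ((1 : Matrix.SpecialLinearGroup (Fin n) ℤ) : Matrix (Fin n) (Fin n) ℤ) := by
              rw [inv_mul_cancel x]
        _ = 1 := Matrix.SpecialLinearGroup.coe_one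
      have e3 : (x : Matrix (Fin n) (Fin n) ℤ) = xm := rfl
      rw [e3] at e2
      rw [e2]
      exact Matrix.map_one _ Int.cast_zero Int.cast_one
  obtain ⟨Xi, hhXi, hXiX⟩ := hXi
  have hmain : hmat = L * Cm * L⁻¹ := by
    have h1 : hmat * L = L * Cm := by
      calc hmat * L = X * G * Xi * (X * P) := by rw [hhXi, hL]
      _ = X * G * (Xi * X * P) := by simp only [Matrix.mul_assoc]
      _ = X * (G * P) := by rw [hXiX, Matrix.one_mul, Matrix.mul_assoc]
      _ = X * (P * Cm) := by rw [hGP]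
      _ = L * Cm := by rw [hL, Matrix.mul_assoc]
    calc hmat = hmat * (L * L⁻¹) := by rw [hLL, Matrix.mul_one]
    _ = hmat * L * L⁻¹ := by simp only [Matrix.mul_assoc]
    _ = L * Cm * L⁻¹ := by rw [h1]
  have key1 : Matrix.diagonal (fun i => S (prv i) (prv i)) * psigma n
      = psigma n * Matrix.diagonal (fun i => S i i) := by
    ext i j
    rw [Matrix.diagonal_mul, Matrix.mul_diagonal]
    by_cases hp : (i : ℕ) = ((j : ℕ) + 1) % n
    · have hpv : prv i = j := by
        apply Fin.ext
        rw [hprv]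
        dsimp only
        rw [hp, prev_next npos (j : ℕ) j.isLt]
      rw [hpv, mul_comm]
    · rw [hpig0 i j hp, mul_zero, zero_mul]
  have key2 : Matrix.diagonal (fun i => S i i) * Matrix.diagonal (fun i => (S i i)⁻¹)
      = (1 : Matrix (Fin n) (Fin n) ℚ) := by
    rw [Matrix.diagonal_mul_diagonal]
    have e : (fun i => S i i * (S i i)⁻¹) = fun _ : Fin n => (1 : ℚ) :=
      funext fun i => mul_inv_cancel₀ (hS_ne i)
    rw [e, Matrix.diagonal_one]
  have hfinal : b * psigma n * u = hmat := by
    rw [hb, hu]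
    calc L * Matrix.diagonal (fun i => S (prv i) (prv i)) * psigma n *
          (Matrix.diagonal (fun i => (S i i)⁻¹) * S)
        = L * (Matrix.diagonal (fun i => S (prv i) (prv i)) * psigma n *
            Matrix.diagonal (fun i => (S i i)⁻¹) * S) := by simp only [Matrix.mul_assoc]
    _ = L * (psigma n * Matrix.diagonal (fun i => S i i) *
            Matrix.diagonal (fun i => (S i i)⁻¹) * S) := by rw [key1]
    _ = L * (psigma n * (Matrix.diagonal (fun i => S i i) *
            Matrix.diagonal (fun i => (S i i)⁻¹)) * S) := by simp only [Matrix.mul_assoc]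
    _ = L * (psigma n * S) := by rw [key2, Matrix.mul_one]
    _ = L * (psigma n * T * L⁻¹) := by rw [hS]; simp only [Matrix.mul_assoc]
    _ = L * (Cm * L⁻¹) := by rw [hpT]
    _ = L * Cm * L⁻¹ := by simp only [Matrix.mul_assoc]
    _ = hmat := hmain.symm
  have hu_blocktri : u.BlockTriangular id := fun i j hij => hu_tri i j hij
  have hudet : u.det = 1 := by
    rw [Matrix.det_of_upperTriangular hu_blocktri]
    exact Finset.prod_eq_one fun i _ => hu_diag i
  have hbdet : b.det = 1 := by
    have hd : hmat.det = b.det * (psigma n).det * u.det := by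
      rw [← hfinal, Matrix.det_mul, Matrix.det_mul]
    rw [hhdet, psigma_det (by omega), hudet, mul_one, mul_one] at hd
    exact hd.symm
  exact ⟨x, b, u, hb_tri, hbdet, hu_diag, hu_tri, hfinal.symm⟩
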